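/- Let v be a finite word that is (97/75+, 61)-free, i.e., v contains no factor with period p ≥ 61 and length strictly greater than (97/75)·p. If h is an occurrence of the formula ABCBA.CBABC in v, with a = |h(A)|, b = |h(B)|, c = |h(C)|, then a + b ≤ 60 and b + c ≤ 60. -/

import Mathlib

/-- The finite word `r` has period `p`: `r_{i+p} = r_i` whenever `i + p < |r|`. -/
def HasPeriod {α : Type*} (r : List α) (p : ℕ) : Prop :=
  ∀ i, i + p < r.length → r[i]? = r[i + p]?

lemma hasPeriod_sandwich {α : Type*} (x y : List α) :
    HasPeriod (x ++ (y ++ x)) (x.length + y.length) := by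
  intro i hi
  simp only [List.length_append] at hi
  have hix : i < x.length := by omega
  rw [List.getElem?_append_left hix]
  rw [List.getElem?_append_right (by omega : x.length ≤ i + (x.length + y.length))]
  rw [List.getElem?_append_right (by omega : y.length ≤ i + (x.length + y.length) - x.length)]
  congr 1
  omega

/-- Let `v` be a `(97/75⁺, 61)`-free finite word (no factor with a period
`p ≥ 61` and length `> (97/75)·p`).  If `h` is an occurrence of the formula
`ABCBA.CBABC` in `v`, with `a = |h(A)|`, `b = |h(B)|`, `c = |h(C)|`, then
`a + b ≤ 60` and `b + c ≤ 60`. -/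
theorem stmt_16 {α : Type*} (v : List α)
    (hv : ¬ ∃ (r : List α) (p : ℕ),
        r <:+: v ∧ 61 ≤ p ∧ HasPeriod r p ∧ 97 * p < 75 * r.length)
    (hA hB hC : List α) (hAne : hA ≠ []) (hBne : hB ≠ []) (hCne : hC ≠ [])
    (h1 : (hA ++ hB ++ hC ++ hB ++ hA) <:+: v)
    (h2 : (hC ++ hB ++ hA ++ hB ++ hC) <:+: v) :
    hA.length + hB.length ≤ 60 ∧ hB.length + hC.length ≤ 60 := by
  have ha1 : 1 ≤ hA.length := List.length_pos_iff.mpr hAne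
  have hb1 : 1 ≤ hB.length := List.length_pos_iff.mpr hBne
  have hc1 : 1 ≤ hC.length := List.length_pos_iff.mpr hCne
  set a := hA.length with ha
  set b := hB.length with hb
  set c := hC.length with hc
  -- freeness in usable form
  have free : ∀ (r : List α) (p : ℕ), r <:+: v → 61 ≤ p → HasPeriod r p →
      75 * r.length ≤ 97 * p := by
    intro r p hr hp hper
    by_contra hlt
    exact hv ⟨r, p, hr, hp, hper, by omega⟩
  -- BAB is an infix of v with period a + b
  have hBAB : (hB ++ (hA ++ hB)) <:+: v :=
    List.IsInfix.trans ⟨hC, hC, by simp [List.append_assoc]⟩ h2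
  have pBAB : HasPeriod (hB ++ (hA ++ hB)) (b + a) := hasPeriod_sandwich hB hA
  have lenBAB : (hB ++ (hA ++ hB)).length = b + a + b := by
    simp only [List.length_append, ← ha, ← hb]; ring
  -- BCB is an infix of v with period b + c
  have hBCB : (hB ++ (hC ++ hB)) <:+: v :=
    List.IsInfix.trans ⟨hA, hA, by simp [List.append_assoc]⟩ h1
  have pBCB : HasPeriod (hB ++ (hC ++ hB)) (b + c) := hasPeriod_sandwich hB hC
  have lenBCB : (hB ++ (hC ++ hB)).length = b + c + b := by
    simp only [List.length_append, ← hb, ← hc]; ring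
  -- w1 = ABCBA has period a + (2b + c)
  have hw1 : (hA ++ ((hB ++ hC ++ hB) ++ hA)) <:+: v := by
    simpa [List.append_assoc] using h1
  have pw1 : HasPeriod (hA ++ ((hB ++ hC ++ hB) ++ hA)) (a + (b + c + b)) := by
    have := hasPeriod_sandwich hA (hB ++ hC ++ hB)
    simpa only [List.length_append, ← ha, ← hb, ← hc, Nat.add_assoc] using this
  have lenw1 : (hA ++ ((hB ++ hC ++ hB) ++ hA)).length = a + (b + c + b) + a := by
    simp only [List.length_append, ← ha, ← hb, ← hc]; ring
  -- w2 = CBABC has period c + (2b + a)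
  have hw2 : (hC ++ ((hB ++ hA ++ hB) ++ hC)) <:+: v := by
    simpa [List.append_assoc] using h2
  have pw2 : HasPeriod (hC ++ ((hB ++ hA ++ hB) ++ hC)) (c + (b + a + b)) := by
    have := hasPeriod_sandwich hC (hB ++ hA ++ hB)
    simpa only [List.length_append, ← ha, ← hb, ← hc, Nat.add_assoc] using this
  have lenw2 : (hC ++ ((hB ++ hA ++ hB) ++ hC)).length = c + (b + a + b) + c := by
    simp only [List.length_append, ← ha, ← hb, ← hc]; ring
  constructor
  · by_contra hab
    push_neg at hab
    have i1 := free _ (b + a) hBAB (by omega) pBAB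
    have i2 := free _ (a + (b + c + b)) hw1 (by omega) pw1
    have i3 := free _ (c + (b + a + b)) hw2 (by omega) pw2
    rw [lenBAB] at i1; rw [lenw1] at i2; rw [lenw2] at i3
    omega
  · by_contra hbc
    push_neg at hbc
    have i1 := free _ (b + c) hBCB (by omega) pBCB
    have i2 := free _ (a + (b + c + b)) hw1 (by omega) pw1
    have i3 := free _ (c + (b + a + b)) hw2 (by omega) pw2
    rw [lenBCB] at i1; rw [lenw1] at i2; rw [lenw2] at i3
    omega
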